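/- Let I be a proper ideal of R = C^∞(M,ℝ) of finite codimension. Then the spectrum spec(I) is finite and nonempty, for each y ∈ spec(I) the ideal I + 𝔫_y has spectrum exactly the singleton {y}, and I equals the intersection ⋂_{y ∈ spec(I)} (I + 𝔫_y). -/

import Mathlib

open scoped Manifold
open Module Filter Topology

noncomputable section

/-- The ℝ-algebra of smooth real-valued functions on a manifold `M` modelled on `ℝ^m`. -/
abbrev SmoothFns (m : ℕ) (M : Type*) [TopologicalSpace M]
    [ChartedSpace (EuclideanSpace ℝ (Fin m)) M] : Type _ :=
  C^(⊤ : ℕ∞)⟮𝓡 m, M; 𝓘(ℝ, ℝ), ℝ⟯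

variable {m : ℕ} {M : Type*} [TopologicalSpace M] [T2Space M] [SecondCountableTopology M]
  [ChartedSpace (EuclideanSpace ℝ (Fin m)) M] [IsManifold (𝓡 m) (⊤ : ℕ∞) M]

/-- The ideal `𝔪ₓ` of smooth functions vanishing at the point `x`. -/
def mIdeal (x : M) : Ideal (SmoothFns m M) where
  carrier := {f | f x = 0}
  add_mem' := by intro f g hf hg; simp_all
  zero_mem' := by simp
  smul_mem' := by intro c f hf; simp_all

/-- The ideal `𝔫ₓ` of smooth functions vanishing on some neighbourhood of the point `x`. -/
def nIdeal (x : M) : Ideal (SmoothFns m M) where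
  carrier := {f | ∀ᶠ y in 𝓝 x, f y = 0}
  add_mem' := by
    intro f g hf hg
    filter_upwards [hf, hg] with y h1 h2
    simp [h1, h2]
  zero_mem' := by filter_upwards with y; simp
  smul_mem' := by
    intro c f hf
    filter_upwards [hf] with y h
    simp [h]

/-- The spectrum of an ideal: the set of common zeros of its elements. -/
def idealSpec (I : Ideal (SmoothFns m M)) : Set M :=
  {x : M | ∀ f ∈ I, f x = 0}


section Aux
open Set

theorem aux_lcs (m : ℕ) (M : Type*) [TopologicalSpace M]
    [ChartedSpace (EuclideanSpace ℝ (Fin m)) M] : LocallyCompactSpace M :=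
  ChartedSpace.locallyCompactSpace (EuclideanSpace ℝ (Fin m)) M

theorem aux_sigma (m : ℕ) (M : Type*) [TopologicalSpace M] [SecondCountableTopology M]
    [ChartedSpace (EuclideanSpace ℝ (Fin m)) M] : SigmaCompactSpace M := by
  have := aux_lcs m M; infer_instance

theorem aux_normal (m : ℕ) (M : Type*) [TopologicalSpace M] [T2Space M]
    [SecondCountableTopology M] [ChartedSpace (EuclideanSpace ℝ (Fin m)) M]
    [IsManifold (𝓡 m) (⊤ : ℕ∞) M] : NormalSpace M := by
  have := aux_lcs m M
  have := Manifold.metrizableSpace (𝓡 m) M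
  have := TopologicalSpace.metrizableSpaceMetric M
  infer_instance

variable {m : ℕ} {M : Type*} [TopologicalSpace M] [T2Space M] [SecondCountableTopology M]
  [ChartedSpace (EuclideanSpace ℝ (Fin m)) M] [IsManifold (𝓡 m) (⊤ : ℕ∞) M]

/-- bump: 1 at x, 0 outside an open set s. -/
theorem aux_bump0 {s : Set M} (hs : IsOpen s) {x : M} (hx : x ∈ s) :
    ∃ f : SmoothFns m M, f x = 1 ∧ ∀ y ∉ s, f y = 0 := by
  have := aux_sigma m M
  obtain ⟨f, h0, h1, -⟩ := exists_contMDiffMap_zero_one_of_isClosed (𝓡 m)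
    (isClosed_compl_iff.2 hs) isClosed_singleton
    (disjoint_singleton_right.2 (by simpa using hx))
  exact ⟨f, h1 rfl, fun y hy => h0 hy⟩

/-- bump: 1 near x, 0 outside an open set s. -/
theorem aux_bump1 {s : Set M} (hs : IsOpen s) {x : M} (hx : x ∈ s) :
    ∃ f : SmoothFns m M, (∀ᶠ y in 𝓝 x, f y = 1) ∧ ∀ y ∉ s, f y = 0 := by
  have := aux_sigma m M
  have := aux_normal m M
  obtain ⟨f, h1, h0, -⟩ := exists_contMDiffMap_one_nhds_of_subset_interior (𝓡 m)
    (isClosed_singleton (x := x)) (by rwa [hs.interior_eq, singleton_subset_iff])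
  refine ⟨f, ?_, h0⟩
  simpa [nhdsSet_singleton] using h1

theorem aux_exhaustion (m : ℕ) (M : Type*) [TopologicalSpace M] [T2Space M]
    [SecondCountableTopology M] [ChartedSpace (EuclideanSpace ℝ (Fin m)) M]
    [IsManifold (𝓡 m) (⊤ : ℕ∞) M] :
    ∃ g : SmoothFns m M, (∀ x, 0 ≤ g x) ∧ ∀ r : ℝ, IsCompact {x : M | g x ≤ r} := by
  have := aux_lcs m M
  have := aux_sigma m M
  set L := (CompactExhaustion.choice M).shiftr with hL
  have hL0 : L 0 = ∅ := rfl
  set U : ℕ → Set M := fun n => interior (L (n + 2)) \ L n with hU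
  have hUopen : ∀ n, IsOpen (U n) := fun n =>
    isOpen_interior.sdiff (L.isCompact n).isClosed
  have hUcover : (univ : Set M) ⊆ ⋃ n, U n := by
    intro x _
    have hfind : x ∈ L (L.find x) := L.mem_find x
    have h1 : 1 ≤ L.find x := by
      rcases Nat.eq_zero_or_pos (L.find x) with h | h
      · rw [h, hL0] at hfind; exact absurd hfind (notMem_empty x)
      · exact h
    refine mem_iUnion.2 ⟨L.find x - 1, ?_, ?_⟩
    · have : L.find x < L.find x - 1 + 2 := by omega
      exact L.subset_interior this hfind
    · intro hmem
      have := L.mem_iff_find_le.1 hmem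
      omega
  obtain ⟨ψ, hψ⟩ := SmoothPartitionOfUnity.exists_isSubordinate (𝓡 m)
    isClosed_univ U hUopen hUcover
  have hsmooth : ContMDiff (𝓡 m) 𝓘(ℝ, ℝ) (⊤ : ℕ∞) fun x => ∑ᶠ n, ψ n x • ((n : ℝ)) :=
    hψ.contMDiff_finsum_smul hUopen fun i => contMDiffOn_const
  refine ⟨⟨_, hsmooth⟩, fun x => ?_, fun r => ?_⟩
  · exact finsum_nonneg fun n => smul_nonneg (ψ.nonneg n x) (Nat.cast_nonneg n)
  · -- key bound: g x ≥ find x - 2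
    have key : ∀ x : M, (L.find x : ℝ) - 2 ≤ ∑ᶠ n, ψ n x • ((n : ℝ)) := by
      intro x
      set c : ℝ := (L.find x : ℝ) - 2 with hc
      have hsupp : (Function.support fun n => ψ n x).Finite :=
        ψ.locallyFinite.point_finite x
      have hterm : ∀ n, ψ n x • c ≤ ψ n x • (n : ℝ) := by
        intro n
        rcases eq_or_ne (ψ n x) 0 with h | h
        · simp [h]
        · have hxU : x ∈ U n := hψ n (subset_closure (Function.mem_support.2 h))
          have hx2 : x ∈ L (n + 2) := interior_subset hxU.1
          have : L.find x ≤ n + 2 := L.mem_iff_find_le.1 hx2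
          have hcn : c ≤ (n : ℝ) := by
            rw [hc]
            have : (L.find x : ℝ) ≤ (n : ℝ) + 2 := by exact_mod_cast this
            linarith
          exact smul_le_smul_of_nonneg_left hcn (ψ.nonneg n x)
      have e1 : ∑ᶠ n, ψ n x • c = ∑ n ∈ hsupp.toFinset, ψ n x • c :=
        finsum_eq_sum_of_support_subset _ (by
          intro n hn
          simp only [Function.mem_support] at hn
          simp only [Finset.coe_sort_coe, Set.Finite.coe_toFinset, Function.mem_support]
          intro h0; exact hn (by simp [h0]))
      have e2 : ∑ᶠ n, ψ n x • ((n : ℝ)) = ∑ n ∈ hsupp.toFinset, ψ n x • ((n : ℝ)) :=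
        finsum_eq_sum_of_support_subset _ (by
          intro n hn
          simp only [Function.mem_support] at hn
          simp only [Finset.coe_sort_coe, Set.Finite.coe_toFinset, Function.mem_support]
          intro h0; exact hn (by simp [h0]))
      calc (L.find x : ℝ) - 2 = (∑ᶠ n, ψ n x) • c := by
            rw [ψ.sum_eq_one (mem_univ x), one_smul]
        _ = ∑ᶠ n, ψ n x • c := finsum_smul' hsupp c
        _ ≤ ∑ᶠ n, ψ n x • (n : ℝ) := by
            rw [e1, e2]
            exact Finset.sum_le_sum fun n _ => hterm n
    refine IsCompact.of_isClosed_subset (L.isCompact (⌈max r 0⌉₊ + 2))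
      (isClosed_le (by exact hsmooth.continuous) continuous_const)
      fun x hx => ?_
    have h1 := key x
    have hx' : (∑ᶠ n, ψ n x • ((n : ℝ))) ≤ r := hx
    have h2 : (L.find x : ℝ) ≤ r + 2 := by
      simp only [mem_setOf_eq] at hx
      linarith [hx']
    have h3 : L.find x ≤ ⌈max r 0⌉₊ + 2 := by
      have : r ≤ (⌈max r 0⌉₊ : ℝ) := le_trans (le_max_left r 0) (Nat.le_ceil _)
      have : (L.find x : ℝ) ≤ (⌈max r 0⌉₊ : ℝ) + 2 := by linarith
      exact_mod_cast this
    exact L.subset h3 (L.mem_find x)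

/-- Evaluation at a point as an `ℝ`-algebra homomorphism. -/
def evalHom (x : M) : SmoothFns m M →ₐ[ℝ] ℝ where
  toFun f := f x
  map_one' := rfl
  map_mul' f g := rfl
  map_zero' := rfl
  map_add' f g := rfl
  commutes' c := rfl

@[simp] theorem evalHom_apply (x : M) (f : SmoothFns m M) : evalHom x f = f x := rfl

/-- Key consequence of finite codimension: an element of `I` whose zero set is compact. -/
theorem aux_compact_zero (I : Ideal (SmoothFns m M))
    (hfd : FiniteDimensional ℝ (SmoothFns m M ⧸ I))
    (g : SmoothFns m M) (hg0 : ∀ x, 0 ≤ g x) (hgc : ∀ r : ℝ, IsCompact {x : M | g x ≤ r}) :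
    ∃ v ∈ I, (∀ x : M, 0 ≤ v x) ∧ IsCompact {x : M | v x = 0} := by
  classical
  set n := finrank ℝ (SmoothFns m M ⧸ I) with hn
  set F : Fin (n + 1) → SmoothFns m M ⧸ I := fun i => Ideal.Quotient.mk I (g ^ (i : ℕ)) with hF
  have hnli : ¬ LinearIndependent ℝ F := by
    intro h
    have := h.fintype_card_le_finrank
    rw [Fintype.card_fin] at this
    omega
  obtain ⟨c, hcsum, i₀, hi₀⟩ := Fintype.not_linearIndependent_iff.1 hnli
  set w : SmoothFns m M := ∑ i, c i • g ^ (i : ℕ) with hw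
  have hwI : w ∈ I := by
    rw [← Ideal.Quotient.eq_zero_iff_mem]
    rw [hw, map_sum]
    refine (Finset.sum_congr rfl fun i _ => ?_).trans hcsum
    exact map_smul (Ideal.Quotient.mkₐ ℝ I) (c i) (g ^ (i : ℕ))
  -- the polynomial
  set P : Polynomial ℝ := ∑ i : Fin (n + 1), Polynomial.monomial (i : ℕ) (c i) with hP
  have hPne : P ≠ 0 := by
    intro h
    have : P.coeff (i₀ : ℕ) = c i₀ := by
      rw [hP, Polynomial.finset_sum_coeff]
      simp only [Polynomial.coeff_monomial]
      rw [Finset.sum_eq_single i₀]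
      · simp
      · intro i _ hne
        exact if_neg fun h => hne (Fin.val_injective h)
      · intro h
        exact absurd (Finset.mem_univ i₀) h
    rw [h] at this
    simp at this
    exact hi₀ this.symm
  have hweval : ∀ x : M, w x = P.eval (g x) := by
    intro x
    have : w x = evalHom x w := rfl
    rw [this, hw, map_sum, hP, Polynomial.eval_finset_sum]
    simp [Polynomial.eval_monomial, smul_eq_mul]
  obtain ⟨r, hr⟩ : ∃ r : ℝ, ∀ t ∈ {t : ℝ | P.IsRoot t}, t ≤ r :=
    (Polynomial.finite_setOf_isRoot hPne).bddAbove.imp fun r hr t ht => hr ht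
  have hsub : {x : M | w x = 0} ⊆ {x : M | g x ≤ r} := by
    intro x hx
    exact hr (g x) (by rw [mem_setOf_eq, Polynomial.IsRoot, ← hweval x]; exact hx)
  have hclosed : IsClosed {x : M | w x = 0} :=
    isClosed_eq w.contMDiff.continuous continuous_const
  have hK : IsCompact {x : M | w x = 0} := (hgc r).of_isClosed_subset hclosed hsub
  refine ⟨w * w, I.mul_mem_left w hwI, fun x => ?_, ?_⟩
  · show 0 ≤ w x * w x
    exact mul_self_nonneg _
  · have : {x : M | (w * w) x = 0} = {x : M | w x = 0} := by
      ext x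
      show w x * w x = 0 ↔ w x = 0
      simp [mul_self_eq_zero]
    rw [this]; exact hK

/-- There is an element of `I` that is positive outside `U`, whenever `U ⊇ spec I` is open. -/
theorem aux_pos_elem (I : Ideal (SmoothFns m M))
    (hfd : FiniteDimensional ℝ (SmoothFns m M ⧸ I))
    {U : Set M} (hUo : IsOpen U) (hspec : idealSpec I ⊆ U) :
    ∃ v ∈ I, (∀ x : M, 0 ≤ v x) ∧ ∀ x ∉ U, 0 < v x := by
  classical
  obtain ⟨g, hg0, hgc⟩ := aux_exhaustion m M
  obtain ⟨v₀, hv₀I, hv₀0, hv₀c⟩ := aux_compact_zero I hfd g hg0 hgc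
  set Z : Set M := Uᶜ with hZ
  have hZc : IsClosed Z := hUo.isClosed_compl
  set C : Set M := {x : M | v₀ x = 0} ∩ Z with hC
  have hCc : IsCompact C := hv₀c.inter_right hZc
  -- for each x in C, an element of I not vanishing at x
  have hex : ∀ x ∈ C, ∃ f ∈ I, f x ≠ 0 := by
    intro x hx
    have : x ∉ idealSpec I := fun h => hx.2 (hspec h)
    simpa [idealSpec] using this
  choose! f hfI hfx using hex
  have hcover : C ⊆ ⋃ x ∈ C, {y : M | f x y ≠ 0} := by
    intro x hx
    exact mem_biUnion hx (hfx x hx)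
  obtain ⟨t, htC, htfin, htcover⟩ := hCc.elim_finite_subcover_image
    (fun x _ => (isOpen_ne_fun (f x).contMDiff.continuous continuous_const : IsOpen {y : M | f x y ≠ 0}))
    hcover
  set v : SmoothFns m M := v₀ + ∑ x ∈ htfin.toFinset, f x * f x with hv
  have hvI : v ∈ I := by
    refine I.add_mem hv₀I (Ideal.sum_mem I fun x hx => I.mul_mem_left _ (hfI x ?_))
    exact htC (htfin.mem_toFinset.1 hx)
  have hveval : ∀ y : M, v y = v₀ y + ∑ x ∈ htfin.toFinset, f x y * f x y := by
    intro y
    show evalHom y v = _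
    rw [hv, map_add, map_sum]
    simp
  have hv0 : ∀ y : M, 0 ≤ v y := by
    intro y
    rw [hveval]
    exact add_nonneg (hv₀0 y) (Finset.sum_nonneg fun x _ => mul_self_nonneg _)
  refine ⟨v, hvI, hv0, fun y hy => ?_⟩
  rw [hveval]
  rcases eq_or_lt_of_le (hv₀0 y) with h0 | h0
  · -- v₀ y = 0, so y ∈ C, covered
    have hyC : y ∈ C := ⟨by simpa using h0.symm, hy⟩
    obtain ⟨x, hxt, hxy⟩ := Set.mem_iUnion₂.1 (htcover hyC)
    have : 0 < ∑ x ∈ htfin.toFinset, f x y * f x y := by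
      exact Finset.sum_pos' (fun x _ => mul_self_nonneg _)
        ⟨x, htfin.mem_toFinset.2 hxt, mul_self_pos.2 hxy⟩
    linarith [this, hv₀0 y]
  · have : (0:ℝ) ≤ ∑ x ∈ htfin.toFinset, f x y * f x y :=
      Finset.sum_nonneg fun x _ => mul_self_nonneg _
    linarith

theorem aux_vanish_mem (I : Ideal (SmoothFns m M))
    (hfd : FiniteDimensional ℝ (SmoothFns m M ⧸ I))
    {U : Set M} (hUo : IsOpen U) (hspec : idealSpec I ⊆ U)
    (u : SmoothFns m M) (hu : ∀ x ∈ U, u x = 0) : u ∈ I := by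
  obtain ⟨v, hvI, hv0, hvpos⟩ := aux_pos_elem I hfd hUo hspec
  have hvz : ∀ y, v y = 0 → y ∈ U := by
    intro y h
    by_contra hy
    exact (hvpos y hy).ne' h
  have hq : ContMDiff (𝓡 m) 𝓘(ℝ, ℝ) (⊤ : ℕ∞) fun y : M => u y / v y := by
    intro x
    rcases eq_or_ne (v x) 0 with h | h
    · have hxU : x ∈ U := hvz x h
      have heq : (fun y : M => u y / v y) =ᶠ[𝓝 x] fun _ => (0:ℝ) := by
        filter_upwards [hUo.mem_nhds hxU] with y hy
        simp [hu y hy]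
      exact (contMDiffAt_const (c := (0:ℝ))).congr_of_eventuallyEq heq
    · exact (u.contMDiff.contMDiffAt).div₀ (v.contMDiff.contMDiffAt) h
  set q : SmoothFns m M := ⟨fun y => u y / v y, hq⟩ with hqdef
  have hquv : u = q * v := by
    apply DFunLike.ext
    intro y
    show u y = u y / v y * v y
    rcases eq_or_ne (v y) 0 with h | h
    · rw [h, mul_zero, hu y (hvz y h)]
    · rw [div_mul_cancel₀ _ h]
  rw [hquv]
  exact I.mul_mem_left q hvI

theorem aux_spec_finite (I : Ideal (SmoothFns m M))
    (hfd : FiniteDimensional ℝ (SmoothFns m M ⧸ I)) : (idealSpec I).Finite := by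
  classical
  by_contra hinf
  rw [← Set.not_infinite, not_not] at hinf
  set n := finrank ℝ (SmoothFns m M ⧸ I) with hn
  obtain ⟨s, hs_sub, hs_card⟩ := hinf.exists_subset_card_eq (n + 1)
  -- bump functions
  have hb : ∀ j : M, j ∈ s → ∃ b : SmoothFns m M, b j = 1 ∧ ∀ y ∈ (↑s : Set M) \ {j}, b y = 0 := by
    intro j hj
    have hfin : ((↑s : Set M) \ {j}).Finite := s.finite_toSet.subset diff_subset
    have hopen : IsOpen ((↑s : Set M) \ {j})ᶜ := hfin.isClosed.isOpen_compl
    obtain ⟨b, hb1, hb0⟩ := aux_bump0 (m := m) hopen (x := j) (by simp)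
    exact ⟨b, hb1, fun y hy => hb0 y (by simpa using hy)⟩
  choose! b hb1 hb0 using hb
  have hli : LinearIndependent ℝ (fun j : ↥s => Ideal.Quotient.mkₐ ℝ I (b j)) := by
    rw [Fintype.linearIndependent_iff]
    intro c hc j
    set g : SmoothFns m M := ∑ i : ↥s, c i • b i with hg
    have hgI : g ∈ I := by
      have h0 : Ideal.Quotient.mkₐ ℝ I g = 0 := by
        rw [hg, map_sum]
        simpa using hc
      rw [Ideal.Quotient.mkₐ_eq_mk] at h0
      exact Ideal.Quotient.eq_zero_iff_mem.mp h0
    have hgj : g (j : M) = 0 := hs_sub j.2 g hgI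
    have : g (j : M) = c j := by
      have : evalHom (j : M) g = c j := by
        rw [hg, map_sum]
        rw [Finset.sum_eq_single j]
        · simp [hb1 j j.2]
        · intro i _ hne
          have : (j : M) ∈ (↑s : Set M) \ {(i : M)} :=
            ⟨j.2, by simp only [mem_singleton_iff]; exact fun h => hne (Subtype.ext h).symm⟩
          simp [hb0 i i.2 (j : M) this]
        · intro h
          exact absurd (Finset.mem_univ j) h
      simpa using this
    rw [this] at hgj
    exact hgj.symm ▸ hgj
  have hcard := hli.fintype_card_le_finrank
  rw [Fintype.card_coe, hs_card] at hcard
  omega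

theorem aux_spec_nonempty (I : Ideal (SmoothFns m M)) (hI : I ≠ ⊤)
    (hfd : FiniteDimensional ℝ (SmoothFns m M ⧸ I)) : (idealSpec I).Nonempty := by
  rw [nonempty_iff_ne_empty]
  intro h
  have : (1 : SmoothFns m M) ∈ I := by
    refine aux_vanish_mem I hfd isOpen_empty (by rw [h]) 1 (fun x hx => absurd hx (notMem_empty x))
  exact hI (I.eq_top_of_isUnit_mem this isUnit_one)

theorem aux_spec_add (I : Ideal (SmoothFns m M)) {y : M} (hy : y ∈ idealSpec I) :
    idealSpec (I + nIdeal y) = {y} := by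
  ext z
  simp only [mem_singleton_iff]
  constructor
  · intro hz
    by_contra hne
    obtain ⟨A, B, hA, hB, hzA, hyB, hAB⟩ := t2_separation hne
    obtain ⟨f, hf1, hf0⟩ := aux_bump0 (m := m) hA hzA
    have hfn : f ∈ nIdeal y := by
      show ∀ᶠ w in 𝓝 y, f w = 0
      filter_upwards [hB.mem_nhds hyB] with w hw
      exact hf0 w (fun hwA => (Set.disjoint_left.1 hAB hwA) hw)
    have : f ∈ I + nIdeal y := by
      rw [Submodule.add_eq_sup]
      exact Submodule.mem_sup_right hfn
    have := hz f this
    rw [hf1] at this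
    exact one_ne_zero this
  · intro h
    subst h
    intro f hf
    rw [Submodule.add_eq_sup, Submodule.mem_sup] at hf
    obtain ⟨g, hg, h, hh, rfl⟩ := hf
    have h1 : g z = 0 := hy g hg
    have h2 : h z = 0 := (hh : ∀ᶠ w in 𝓝 z, h w = 0).self_of_nhds
    show g z + h z = 0
    rw [h1, h2, add_zero]

theorem aux_decomp (I : Ideal (SmoothFns m M))
    (hfd : FiniteDimensional ℝ (SmoothFns m M ⧸ I)) :
    I = ⨅ y ∈ idealSpec I, (I + nIdeal y) := by
  classical
  apply le_antisymm
  · exact le_iInf₂ fun y hy => by rw [Submodule.add_eq_sup]; exact le_sup_left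
  · intro f hf
    simp only [Submodule.mem_iInf] at hf
    have hfin := aux_spec_finite I hfd
    set T := hfin.toFinset with hT
    have hdec : ∀ y ∈ idealSpec I, ∃ g ∈ I, ∃ h ∈ nIdeal y, g + h = f := by
      intro y hy
      have h1 := hf y hy
      rw [Submodule.add_eq_sup, Submodule.mem_sup] at h1
      obtain ⟨g, hg, h, hh, hsum⟩ := h1
      exact ⟨g, hg, h, hh, hsum⟩
    choose! g hgI h hhn hghf using hdec
    have hVex : ∀ y ∈ idealSpec I, ∃ V : Set M, IsOpen V ∧ y ∈ V ∧ ∀ z ∈ V, h y z = 0 := by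
      intro y hy
      rcases eventually_nhds_iff.1 (hhn y hy) with ⟨V, hV0, hVo, hVy⟩
      exact ⟨V, hVo, hVy, hV0⟩
    choose! V hVo hVy hV0 using hVex
    obtain ⟨W, hW, hWdisj⟩ := hfin.t2_separation
    have hχex : ∀ y ∈ idealSpec I, ∃ χ : SmoothFns m M,
        (∀ᶠ z in 𝓝 y, χ z = 1) ∧ ∀ z ∉ V y ∩ W y, χ z = 0 :=
      fun y hy => aux_bump1 (m := m) ((hVo y hy).inter (hW y).2) ⟨hVy y hy, (hW y).1⟩
    choose! χ hχ1 hχ0 using hχex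
    have hNex : ∀ y ∈ idealSpec I, ∃ N : Set M, IsOpen N ∧ y ∈ N ∧ ∀ z ∈ N, χ y z = 1 := by
      intro y hy
      rcases eventually_nhds_iff.1 (hχ1 y hy) with ⟨N, hN0, hNo, hNy⟩
      exact ⟨N, hNo, hNy, hN0⟩
    choose! N hNo hNy hN1 using hNex
    set U : Set M := ⋃ y ∈ T, (N y ∩ W y ∩ V y) with hU
    have hUo : IsOpen U := isOpen_biUnion fun y hy =>
      ((hNo y (hfin.mem_toFinset.1 hy)).inter (hW y).2).inter (hVo y (hfin.mem_toFinset.1 hy))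
    have hUspec : idealSpec I ⊆ U := fun y hy =>
      mem_biUnion (hfin.mem_toFinset.2 hy) ⟨⟨hNy y hy, (hW y).1⟩, hVy y hy⟩
    set u : SmoothFns m M := f - ∑ y ∈ T, χ y * g y with hu
    have huv : ∀ z ∈ U, u z = 0 := by
      intro z hz
      obtain ⟨y, hyT, hzy⟩ := mem_iUnion₂.1 hz
      have hyS : y ∈ idealSpec I := hfin.mem_toFinset.1 hyT
      have hsum : ∑ y' ∈ T, χ y' z * g y' z = χ y z * g y z := by
        apply Finset.sum_eq_single_of_mem y hyT
        intro y' hy'T hne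
        have hy'S : y' ∈ idealSpec I := hfin.mem_toFinset.1 hy'T
        have hzW : z ∈ W y := hzy.1.2
        have hznot : z ∉ V y' ∩ W y' := by
          intro hzin
          have hd : Disjoint (W y) (W y') := hWdisj hyS hy'S (fun hh => hne (by rw [hh]))
          exact (Set.disjoint_left.1 hd hzW) hzin.2
        rw [hχ0 y' hy'S z hznot, zero_mul]
      have heval : u z = f z - ∑ y' ∈ T, χ y' z * g y' z := by
        show evalHom z u = _
        rw [hu, map_sub, map_sum]
        simp
      have hgyz : g y z = f z := by
        have h1 : (g y + h y) z = f z := by rw [hghf y hyS]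
        have h2 : g y z + h y z = f z := h1
        have h3 : h y z = 0 := hV0 y hyS z hzy.2
        linarith
      rw [heval, hsum, hN1 y hyS z hzy.1.1, one_mul, hgyz, sub_self]
    have huI : u ∈ I := aux_vanish_mem I hfd hUo hUspec u huv
    have hfu : f = u + ∑ y ∈ T, χ y * g y := by rw [hu]; ring
    rw [hfu]
    exact I.add_mem huI (Ideal.sum_mem I fun y hy =>
      I.mul_mem_left _ (hgI y (hfin.mem_toFinset.1 hy)))

end Aux

/-- For a proper ideal `I` of `R = C^∞(M,ℝ)` of finite codimension, the spectrum
of `I` is finite and nonempty, for each `y ∈ spec I` the ideal `I + 𝔫_y` has spectrum `{y}`,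
and `I = ⋂_{y ∈ spec I} (I + 𝔫_y)`. -/
theorem spec_finite_and_primary_decomposition
    (I : Ideal (SmoothFns m M)) (hI : I ≠ ⊤)
    (hfd : FiniteDimensional ℝ (SmoothFns m M ⧸ I)) :
    (idealSpec I).Finite ∧ (idealSpec I).Nonempty ∧
      (∀ y ∈ idealSpec I, idealSpec (I + nIdeal y) = {y}) ∧
      I = ⨅ y ∈ idealSpec I, (I + nIdeal y) := by
  exact ⟨aux_spec_finite I hfd, aux_spec_nonempty I hI hfd,
    fun y hy => aux_spec_add I hy, aux_decomp I hfd⟩
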